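/- Let λ > 0, μ ≥ 0, and q ∈ [0,1]. Let P₀ = Poisson(λ) and P₁ = (1−q)·Poisson(λ) + q·Poisson(λ+μ) (a mixture of Poisson distributions on ℕ). Then the relative entropy satisfies D(P₀‖P₁) = −Σ_{y=0}^∞ (λ^y e^{−λ}/y!) · ln[ 1 − q + q·(1 + μ/λ)^y · e^{−μ} ] ≤ (q²/2)·( e^{μ²/λ} − 1 ). -/

import Mathlib

open Real Set

lemma tsum_pow_div_factorial (x : ℝ) :
    ∑' n : ℕ, x ^ n / (Nat.factorial n : ℝ) = Real.exp x := by
  rw [Real.exp_eq_exp_ℝ, NormedSpace.exp_eq_tsum_div]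

lemma summable_nat_mul_pow_div_factorial (x : ℝ) :
    Summable (fun n : ℕ => (n : ℝ) * x ^ n / (Nat.factorial n : ℝ)) := by
  apply (summable_nat_add_iff 1).mp
  have h : ∀ n : ℕ, ((n + 1 : ℕ) : ℝ) * x ^ (n + 1) / (Nat.factorial (n + 1) : ℝ)
      = x * (x ^ n / (Nat.factorial n : ℝ)) := by
    intro n
    rw [Nat.factorial_succ]
    have h0 : (Nat.factorial n : ℝ) ≠ 0 := Nat.cast_ne_zero.2 n.factorial_ne_zero
    push_cast
    field_simp
    ring
  simpa only [h] using (Real.summable_pow_div_factorial x).mul_left x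

lemma tsum_nat_mul_pow_div_factorial (x : ℝ) :
    ∑' n : ℕ, (n : ℝ) * x ^ n / (Nat.factorial n : ℝ) = x * Real.exp x := by
  have h : ∀ n : ℕ, ((n + 1 : ℕ) : ℝ) * x ^ (n + 1) / (Nat.factorial (n + 1) : ℝ)
      = x * (x ^ n / (Nat.factorial n : ℝ)) := by
    intro n
    rw [Nat.factorial_succ]
    have h0 : (Nat.factorial n : ℝ) ≠ 0 := Nat.cast_ne_zero.2 n.factorial_ne_zero
    push_cast
    field_simp
    ring
  rw [Summable.tsum_eq_zero_add (summable_nat_mul_pow_div_factorial x)]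
  simp only [h]
  rw [tsum_mul_left, tsum_pow_div_factorial]
  simp

lemma aux_hasDeriv_m (x : ℝ) (hx : -1 < x) :
    HasDerivAt (fun x : ℝ => 3 * (x - x ^ 2 / 2 - Real.log (1 + x)) + x ^ 3 / (1 + x))
      (-x ^ 3 / (1 + x) ^ 2) x := by
  have h1 : (1 : ℝ) + x ≠ 0 := by linarith
  have hd1 : HasDerivAt (fun x : ℝ => 1 + x) 1 x := (hasDerivAt_id x).const_add 1
  have hlog : HasDerivAt (fun x : ℝ => Real.log (1 + x)) (1 / (1 + x)) x := by
    simpa using hd1.log h1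
  have hx2 : HasDerivAt (fun x : ℝ => x ^ 2 / 2) x x := by
    simpa using (hasDerivAt_pow 2 x).div_const 2
  have hx3 : HasDerivAt (fun x : ℝ => x ^ 3) (3 * x ^ 2) x := by
    simpa using hasDerivAt_pow 3 x
  have hmain := (((hasDerivAt_id x).sub hx2).sub hlog).const_mul 3 |>.add (hx3.div hd1 h1)
  exact hmain.congr_deriv (by field_simp; ring)

lemma aux_m_nonpos {t : ℝ} (ht : -1 < t) :
    3 * (t - t ^ 2 / 2 - Real.log (1 + t)) + t ^ 3 / (1 + t) ≤ 0 := by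
  set f : ℝ → ℝ := fun x => 3 * (x - x ^ 2 / 2 - Real.log (1 + x)) + x ^ 3 / (1 + x) with hf
  have hf0 : f 0 = 0 := by simp [hf]
  rcases le_or_gt 0 t with h | h
  · have hA : AntitoneOn f (Set.Ici (0 : ℝ)) := by
      apply antitoneOn_of_hasDerivWithinAt_nonpos (convex_Ici 0)
        (f' := fun x => -x ^ 3 / (1 + x) ^ 2)
      · intro x hx
        exact (aux_hasDeriv_m x (by simp at hx; linarith)).continuousAt.continuousWithinAt
      · intro x hx
        rw [interior_Ici] at hx
        exact (aux_hasDeriv_m x (by simp at hx; linarith)).hasDerivWithinAt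
      · intro x hx
        rw [interior_Ici] at hx
        simp only [Set.mem_Ioi] at hx
        have : (0:ℝ) ≤ x ^ 3 / (1 + x) ^ 2 := by positivity
        rw [neg_div]
        linarith
    have := hA (Set.mem_Ici.2 le_rfl) (Set.mem_Ici.2 h) h
    rwa [hf0] at this
  · have hM : MonotoneOn f (Set.Ioc (-1 : ℝ) 0) := by
      apply monotoneOn_of_hasDerivWithinAt_nonneg (convex_Ioc (-1) 0)
        (f' := fun x => -x ^ 3 / (1 + x) ^ 2)
      · intro x hx
        exact (aux_hasDeriv_m x hx.1).continuousAt.continuousWithinAt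
      · intro x hx
        rw [interior_Ioc] at hx
        exact (aux_hasDeriv_m x hx.1).hasDerivWithinAt
      · intro x hx
        rw [interior_Ioc] at hx
        have hx1 : -1 < x := hx.1
        have hx0 : x < 0 := hx.2
        have h1 : (0:ℝ) < (1 + x) ^ 2 := pow_pos (by linarith) 2
        have h2 : (0:ℝ) ≤ -x ^ 3 := by nlinarith [mul_nonneg (neg_nonneg.2 hx0.le) (sq_nonneg x)]
        rw [neg_div]
        have : (0:ℝ) ≤ x ^ 3 / (1+x)^2 ∨ True := Or.inr trivial
        rw [← neg_div] 
        exact div_nonneg h2 h1.le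
    have := hM (Set.mem_Ioc.2 ⟨ht, h.le⟩) (Set.mem_Ioc.2 ⟨by norm_num, le_rfl⟩) h.le
    rwa [hf0] at this

lemma key_ineq {t q : ℝ} (ht : -1 < t) (hq0 : 0 ≤ q) (hq1 : q ≤ 1) :
    q * t - (q * t) ^ 2 / 2 - Real.log (1 + q * t)
      ≤ q ^ 3 * (t - t ^ 2 / 2 - Real.log (1 + t)) := by
  set C : ℝ := t - t ^ 2 / 2 - Real.log (1 + t) with hC
  set W : ℝ → ℝ := fun s => s ^ 3 * C - (s * t - (s * t) ^ 2 / 2 - Real.log (1 + s * t))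
    with hWdef
  have hpos : ∀ s : ℝ, 0 ≤ s → s ≤ 1 → 0 < 1 + s * t := by
    intro s h0 h1
    rcases le_or_gt 0 t with h | h
    · nlinarith
    · nlinarith
  have hW : ∀ s : ℝ, 0 ≤ s → s ≤ 1 →
      HasDerivAt W (s ^ 2 * (3 * C + t ^ 3 / (1 + s * t))) s := by
    intro s h0 h1
    have hne : 1 + s * t ≠ 0 := ne_of_gt (hpos s h0 h1)
    have hst : HasDerivAt (fun s : ℝ => s * t) t s := by
      simpa using (hasDerivAt_id s).mul_const t
    have hsq : HasDerivAt (fun s : ℝ => (s * t) ^ 2 / 2) (2 * (s * t) * t / 2) s := by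
      exact (hst.pow 2).div_const 2 |>.congr_deriv (by ring)
    have hlog : HasDerivAt (fun s : ℝ => Real.log (1 + s * t)) (t / (1 + s * t)) s := by
      simpa using (hst.const_add 1).log hne
    have hcube : HasDerivAt (fun s : ℝ => s ^ 3 * C) (3 * s ^ 2 * C) s := by
      simpa using (hasDerivAt_pow 3 s).mul_const C
    have := hcube.sub ((hst.sub hsq).sub hlog)
    exact this.congr_deriv (by field_simp; ring)
  have hW0 : W 0 = 0 := by simp [hWdef]
  have hW1 : W 1 = 0 := by simp [hWdef, hC]
  have hu_anti : ∀ s s' : ℝ, 0 ≤ s → s ≤ s' → s' ≤ 1 →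
      t ^ 3 / (1 + s' * t) ≤ t ^ 3 / (1 + s * t) := by
    intro s s' h0 hss h1
    have d1 := hpos s h0 (le_trans hss h1)
    have d2 := hpos s' (le_trans h0 hss) h1
    have key : t ^ 3 / (1 + s * t) - t ^ 3 / (1 + s' * t)
        = t ^ 4 * (s' - s) / ((1 + s * t) * (1 + s' * t)) := by
      rw [div_sub_div _ _ d1.ne' d2.ne']; congr 1; ring
    have h4 : (0:ℝ) ≤ t ^ 4 * (s' - s) / ((1 + s * t) * (1 + s' * t)) := by
      apply div_nonneg
      · have : (0:ℝ) ≤ t ^ 4 := by positivity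
        nlinarith
      · positivity
    linarith
  rw [← sub_nonneg]
  have hgoal : q ^ 3 * C - (q * t - (q * t) ^ 2 / 2 - Real.log (1 + q * t)) = W q := rfl
  rw [show q ^ 3 * (t - t ^ 2 / 2 - Real.log (1 + t)) - (q * t - (q * t) ^ 2 / 2
      - Real.log (1 + q * t)) = W q from rfl]
  by_cases hu : 0 ≤ 3 * C + t ^ 3 / (1 + q * t)
  · -- W monotone on [0, q]
    have hM : MonotoneOn W (Set.Icc 0 q) := by
      apply monotoneOn_of_hasDerivWithinAt_nonneg (convex_Icc 0 q)
        (f' := fun s => s ^ 2 * (3 * C + t ^ 3 / (1 + s * t)))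
      · intro x hx
        exact (hW x hx.1 (le_trans hx.2 hq1)).continuousAt.continuousWithinAt
      · intro x hx
        rw [interior_Icc] at hx
        exact (hW x hx.1.le (le_trans hx.2.le hq1)).hasDerivWithinAt
      · intro x hx
        rw [interior_Icc] at hx
        have h1 : t ^ 3 / (1 + q * t) ≤ t ^ 3 / (1 + x * t) :=
          hu_anti x q hx.1.le hx.2.le hq1
        have h2 : 0 ≤ 3 * C + t ^ 3 / (1 + x * t) := by linarith
        have h3 : (0:ℝ) ≤ x ^ 2 := sq_nonneg x
        positivity
    have := hM (Set.mem_Icc.2 ⟨le_rfl, hq0⟩) (Set.mem_Icc.2 ⟨hq0, le_rfl⟩) hq0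
    rw [hW0] at this
    exact this
  · push_neg at hu
    have hA : AntitoneOn W (Set.Icc q 1) := by
      apply antitoneOn_of_hasDerivWithinAt_nonpos (convex_Icc q 1)
        (f' := fun s => s ^ 2 * (3 * C + t ^ 3 / (1 + s * t)))
      · intro x hx
        exact (hW x (le_trans hq0 hx.1) hx.2).continuousAt.continuousWithinAt
      · intro x hx
        rw [interior_Icc] at hx
        exact (hW x (le_trans hq0 hx.1.le) hx.2.le).hasDerivWithinAt
      · intro x hx
        rw [interior_Icc] at hx
        have h1 : t ^ 3 / (1 + x * t) ≤ t ^ 3 / (1 + q * t) :=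
          hu_anti q x hq0 hx.1.le hx.2.le
        have h2 : 3 * C + t ^ 3 / (1 + x * t) ≤ 0 := by linarith
        have h3 : (0:ℝ) ≤ x ^ 2 := sq_nonneg x
        exact mul_nonpos_of_nonneg_of_nonpos h3 h2
    have := hA (Set.mem_Icc.2 ⟨le_rfl, hq1⟩) (Set.mem_Icc.2 ⟨hq1, le_rfl⟩) hq1
    rw [hW1] at this
    exact this

/-- Relative entropy between a Poisson distribution `Poisson(λ)` and the mixture
`(1−q)·Poisson(λ) + q·Poisson(λ+μ)` is at most `(q²/2)·(e^{μ²/λ} − 1)`. -/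
theorem poisson_mixture_kl_bound (lam mu q : ℝ) (hlam : 0 < lam) (hmu : 0 ≤ mu)
    (hq0 : 0 ≤ q) (hq1 : q ≤ 1) :
    -∑' y : ℕ, (lam ^ y * Real.exp (-lam) / (Nat.factorial y : ℝ))
        * Real.log (1 - q + q * (1 + mu / lam) ^ y * Real.exp (-mu))
      ≤ q ^ 2 / 2 * (Real.exp (mu ^ 2 / lam) - 1) := by
  have hlam' : lam ≠ 0 := ne_of_gt hlam
  obtain ⟨a, ha_def⟩ : ∃ x : ℝ, x = mu / lam := ⟨_, rfl⟩
  have ha : 0 ≤ a := ha_def ▸ div_nonneg hmu hlam.le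
  have hmul : lam * a = mu := by rw [ha_def]; field_simp
  obtain ⟨ρ, hρ_def⟩ : ∃ x : ℝ, x = 1 + a := ⟨_, rfl⟩
  have hρ : 0 < ρ := by rw [hρ_def]; linarith
  have hlρ : lam * ρ = lam + mu := by rw [hρ_def, mul_add, mul_one, hmul]
  have hlρ2 : lam * ρ ^ 2 = lam + 2 * mu + mu ^ 2 / lam := by
    rw [hρ_def, ha_def]; field_simp; ring
  obtain ⟨p, hp⟩ : ∃ p : ℕ → ℝ,
      ∀ y : ℕ, p y = lam ^ y * Real.exp (-lam) / (Nat.factorial y : ℝ) := ⟨_, fun _ => rfl⟩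
  obtain ⟨r, hr⟩ : ∃ r : ℕ → ℝ, ∀ y : ℕ, r y = ρ ^ y * Real.exp (-mu) := ⟨_, fun _ => rfl⟩
  have hppos : ∀ y, 0 ≤ p y := by
    intro y
    rw [hp y]
    have h1 : (0:ℝ) ≤ lam ^ y := pow_nonneg hlam.le y
    have h2 : (0:ℝ) < (Nat.factorial y : ℝ) := by positivity
    positivity
  have hrpos : ∀ y, 0 < r y := fun y => (hr y) ▸ mul_pos (pow_pos hρ y) (Real.exp_pos _)
  -- basic series
  have hp' : ∀ y : ℕ, p y = Real.exp (-lam) * (lam ^ y / (Nat.factorial y : ℝ)) := by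
    intro y; rw [hp y]; ring
  have Sp : Summable p :=
    ((Real.summable_pow_div_factorial lam).mul_left (Real.exp (-lam))).congr
      (fun y => (hp' y).symm)
  have Tp : ∑' y, p y = 1 := by
    rw [tsum_congr hp', tsum_mul_left, tsum_pow_div_factorial, ← Real.exp_add]
    simp
  have hpr : ∀ y : ℕ, p y * r y
      = (Real.exp (-lam) * Real.exp (-mu)) * ((lam * ρ) ^ y / (Nat.factorial y : ℝ)) := by
    intro y; rw [hp y, hr y, mul_pow]; ring
  have Spr : Summable (fun y => p y * r y) :=
    ((Real.summable_pow_div_factorial (lam * ρ)).mul_left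
      (Real.exp (-lam) * Real.exp (-mu))).congr (fun y => (hpr y).symm)
  have Tpr : ∑' y, p y * r y = 1 := by
    rw [tsum_congr hpr, tsum_mul_left, tsum_pow_div_factorial, ← Real.exp_add, ← Real.exp_add]
    rw [show -lam + -mu + lam * ρ = 0 by rw [hlρ]; ring]
    exact Real.exp_zero
  have hpr2 : ∀ y : ℕ, p y * r y ^ 2
      = (Real.exp (-lam) * (Real.exp (-mu) * Real.exp (-mu)))
        * ((lam * ρ ^ 2) ^ y / (Nat.factorial y : ℝ)) := by
    intro y; rw [hp y, hr y, mul_pow]; ring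
  have Spr2 : Summable (fun y => p y * r y ^ 2) :=
    ((Real.summable_pow_div_factorial (lam * ρ ^ 2)).mul_left
      (Real.exp (-lam) * (Real.exp (-mu) * Real.exp (-mu)))).congr (fun y => (hpr2 y).symm)
  have Tpr2 : ∑' y, p y * r y ^ 2 = Real.exp (mu ^ 2 / lam) := by
    rw [tsum_congr hpr2, tsum_mul_left, tsum_pow_div_factorial, ← Real.exp_add, ← Real.exp_add,
      ← Real.exp_add]
    congr 1
    rw [hlρ2]
    ring
  have hpy : ∀ y : ℕ, p y * y
      = Real.exp (-lam) * ((y : ℝ) * lam ^ y / (Nat.factorial y : ℝ)) := by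
    intro y; rw [hp y]; ring
  have Spy : Summable (fun y => p y * (y : ℝ)) :=
    ((summable_nat_mul_pow_div_factorial lam).mul_left (Real.exp (-lam))).congr
      (fun y => (hpy y).symm)
  have Tpy : ∑' y, p y * (y : ℝ) = lam := by
    rw [tsum_congr hpy, tsum_mul_left, tsum_nat_mul_pow_div_factorial, ← mul_assoc,
      mul_comm (Real.exp (-lam)) lam, mul_assoc, ← Real.exp_add]
    simp
  -- derived series
  obtain ⟨V, hV_def⟩ : ∃ x : ℝ, x = Real.exp (mu ^ 2 / lam) - 1 := ⟨_, rfl⟩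
  have St : Summable (fun y => p y * (r y - 1)) :=
    (Spr.sub Sp).congr (fun y => by ring)
  have Tt : ∑' y, p y * (r y - 1) = 0 := by
    have h : ∀ y : ℕ, p y * (r y - 1) = p y * r y - p y := fun y => by ring
    rw [tsum_congr h, Summable.tsum_sub Spr Sp, Tpr, Tp, sub_self]
  have ht2 : ∀ y : ℕ, p y * (r y - 1) ^ 2 = p y * r y ^ 2 - 2 * (p y * r y) + p y :=
    fun y => by ring
  have St2 : Summable (fun y => p y * (r y - 1) ^ 2) :=
    (((Spr2.sub (Spr.mul_left 2)).add Sp)).congr (fun y => (ht2 y).symm)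
  have Tt2 : ∑' y, p y * (r y - 1) ^ 2 = V := by
    rw [tsum_congr ht2, Summable.tsum_add (Spr2.sub (Spr.mul_left 2)) Sp,
      Summable.tsum_sub Spr2 (Spr.mul_left 2), tsum_mul_left, Tpr2, Tpr, Tp, hV_def]
    ring
  have hlogr : ∀ y : ℕ, p y * Real.log (r y)
      = Real.log ρ * (p y * (y : ℝ)) + (-mu) * p y := by
    intro y
    rw [hr y, Real.log_mul (pow_ne_zero y (ne_of_gt hρ)) (Real.exp_ne_zero _), Real.log_pow,
      Real.log_exp]
    ring
  have Slog : Summable (fun y => p y * Real.log (r y)) :=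
    ((Spy.mul_left (Real.log ρ)).add (Sp.mul_left (-mu))).congr (fun y => (hlogr y).symm)
  have Tlog : ∑' y, p y * Real.log (r y) = lam * Real.log ρ - mu := by
    rw [tsum_congr hlogr, Summable.tsum_add (Spy.mul_left (Real.log ρ)) (Sp.mul_left (-mu)),
      tsum_mul_left, tsum_mul_left, Tpy, Tp]
    ring
  -- psi series
  have hψ : ∀ y : ℕ, p y * ((r y - 1) - (r y - 1) ^ 2 / 2 - Real.log (r y))
      = (p y * (r y - 1) - (p y * (r y - 1) ^ 2) / 2) - p y * Real.log (r y) := fun y => by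
    ring
  have Sψ : Summable (fun y => p y * ((r y - 1) - (r y - 1) ^ 2 / 2 - Real.log (r y))) :=
    ((St.sub (St2.div_const 2)).sub Slog).congr (fun y => (hψ y).symm)
  have Tψ : ∑' y, p y * ((r y - 1) - (r y - 1) ^ 2 / 2 - Real.log (r y))
      = -V / 2 - (lam * Real.log ρ - mu) := by
    rw [tsum_congr hψ, Summable.tsum_sub (St.sub (St2.div_const 2)) Slog,
      Summable.tsum_sub St (St2.div_const 2), tsum_div_const, Tt, Tt2, Tlog]
    ring
  -- the lower bound function
  obtain ⟨low, hlow⟩ : ∃ low : ℕ → ℝ, ∀ y : ℕ, low y = q * (r y - 1) - (q * (r y - 1)) ^ 2 / 2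
      - q ^ 3 * ((r y - 1) - (r y - 1) ^ 2 / 2 - Real.log (r y)) := ⟨_, fun _ => rfl⟩
  have hplow : ∀ y : ℕ, p y * low y
      = q * (p y * (r y - 1)) - ((q ^ 2 / 2) * (p y * (r y - 1) ^ 2)
        + q ^ 3 * (p y * ((r y - 1) - (r y - 1) ^ 2 / 2 - Real.log (r y)))) := by
    intro y; rw [hlow y]; ring
  have Slow : Summable (fun y => p y * low y) :=
    ((St.mul_left q).sub ((St2.mul_left (q ^ 2 / 2)).add (Sψ.mul_left (q ^ 3)))).congr
      (fun y => (hplow y).symm)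
  have Tlow : ∑' y, p y * low y
      = -(q ^ 2 / 2) * V - q ^ 3 * (-V / 2 - (lam * Real.log ρ - mu)) := by
    rw [tsum_congr hplow, Summable.tsum_sub (St.mul_left q) ((St2.mul_left (q ^ 2 / 2)).add
      (Sψ.mul_left (q ^ 3))), Summable.tsum_add (St2.mul_left (q ^ 2 / 2)) (Sψ.mul_left (q ^ 3)),
      tsum_mul_left, tsum_mul_left, tsum_mul_left, Tt, Tt2, Tψ]
    ring
  -- goal function pieces
  have hLr : ∀ y : ℕ, 1 - q + q * (1 + mu / lam) ^ y * Real.exp (-mu) = 1 + q * (r y - 1) := by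
    intro y
    rw [hr y, show (1 : ℝ) + mu / lam = ρ by rw [hρ_def, ha_def]]
    ring
  have hLpos : ∀ y : ℕ, 0 < 1 + q * (r y - 1) := by
    intro y
    rcases eq_or_lt_of_le hq0 with h | h
    · rw [← h]; norm_num
    · nlinarith [hrpos y]
  have hbound : ∀ y : ℕ, p y * low y
      ≤ p y * Real.log (1 - q + q * (1 + mu / lam) ^ y * Real.exp (-mu)) := by
    intro y
    apply mul_le_mul_of_nonneg_left _ (hppos y)
    rw [hLr y]
    have ht : -1 < r y - 1 := by linarith [hrpos y]
    have hk := key_ineq ht hq0 hq1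
    rw [show (1:ℝ) + (r y - 1) = r y by ring] at hk
    rw [hlow y]
    linarith
  have hupper : ∀ y : ℕ, p y * Real.log (1 - q + q * (1 + mu / lam) ^ y * Real.exp (-mu))
      ≤ p y * (q * (r y - 1)) := by
    intro y
    apply mul_le_mul_of_nonneg_left _ (hppos y)
    rw [hLr y]
    have := Real.log_le_sub_one_of_pos (hLpos y)
    linarith
  -- summability of the goal function
  obtain ⟨f, hf⟩ : ∃ f : ℕ → ℝ, ∀ y : ℕ,
      f y = p y * Real.log (1 - q + q * (1 + mu / lam) ^ y * Real.exp (-mu)) :=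
    ⟨_, fun _ => rfl⟩
  have Sg2 : Summable (fun y => p y * (q * (r y - 1))) :=
    (St.mul_left q).congr (fun y => by ring)
  have Sfsub : Summable (fun y => f y - p y * low y) := by
    apply Summable.of_nonneg_of_le (fun y => sub_nonneg.2 ((hf y) ▸ hbound y))
      (fun y => sub_le_sub_right ((hf y) ▸ hupper y) _)
    exact Sg2.sub Slow
  have Sf : Summable f :=
    (Sfsub.add Slow).congr (fun y => by ring)
  -- final chain
  have hble : ∀ y : ℕ, p y * low y ≤ f y := fun y => (hf y) ▸ hbound y
  have hle : ∑' y, p y * low y ≤ ∑' y, f y := Summable.tsum_le_tsum hble Slow Sf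
  have hS : mu - lam * Real.log ρ - V / 2 ≤ 0 := by
    have hm := aux_m_nonpos (t := a) (by linarith)
    have h1 : (0:ℝ) ≤ a ^ 3 / (1 + a) := by positivity
    have h2 : a - a ^ 2 / 2 ≤ Real.log (1 + a) := by linarith
    have h3 : lam * (a - a ^ 2 / 2) ≤ lam * Real.log (1 + a) :=
      mul_le_mul_of_nonneg_left h2 hlam.le
    have h4 : lam * (a - a ^ 2 / 2) = mu - mu ^ 2 / lam / 2 := by
      rw [ha_def]; field_simp
    have h5 : mu ^ 2 / lam + 1 ≤ Real.exp (mu ^ 2 / lam) := Real.add_one_le_exp _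
    rw [hρ_def, hV_def]
    rw [h4] at h3
    linarith
  have hq3 : q ^ 3 * (mu - lam * Real.log ρ - V / 2) ≤ 0 :=
    mul_nonpos_of_nonneg_of_nonpos (by positivity) hS
  have hgoal : ∀ y : ℕ, (lam ^ y * Real.exp (-lam) / (Nat.factorial y : ℝ))
      * Real.log (1 - q + q * (1 + mu / lam) ^ y * Real.exp (-mu)) = f y := by
    intro y; rw [hf y, hp y]
  rw [tsum_congr hgoal]
  calc -∑' y, f y ≤ -(∑' y, p y * low y) := by linarith
    _ = q ^ 2 / 2 * V + q ^ 3 * (mu - lam * Real.log ρ - V / 2) := by rw [Tlow]; ring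
    _ ≤ q ^ 2 / 2 * V := by linarith
    _ = q ^ 2 / 2 * (Real.exp (mu ^ 2 / lam) - 1) := by rw [hV_def]
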